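/- Let F be a family of finite posets, closed under isomorphism and under taking ideals and filters, such that for every poset P in F the coefficient of n^1 in the order polynomial Ω_P(n) is nonnegative. Then for every P in F, every subposet A ⊆ P with min(P) ∪ max(P) ⊆ A, and every natural labeling A = {a_0, a_1, …, a_r}, there exists a polynomial f ∈ ℚ[t_1, …, t_r] all of whose coefficients are nonnegative such that Ω_{P,A}(λ) = f(λ(a_1) − λ(a_0), λ(a_2) − λ(a_1), …, λ(a_r) − λ(a_{r−1})) for every map λ : A → ℤ satisfying λ(a_0) ≤ λ(a_1) ≤ ⋯ ≤ λ(a_r). -/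

import Mathlib

/-- The number of order preserving maps `λ̂ : α → ℤ` agreeing with `lam` on the
marked subset `A` (the lattice points of the marked order polytope `O_{P,A}(λ)`). -/
noncomputable def markedCount {α : Type} [PartialOrder α] (A : Set α) (lam : α → ℤ) : ℕ :=
  Nat.card {f : α → ℤ // Monotone f ∧ ∀ a ∈ A, f a = lam a}

/-- The number of order preserving maps from `α` into the `n`-chain `{1, …, n}`. -/
noncomputable def orderCount (α : Type) [PartialOrder α] (n : ℕ) : ℕ :=
  Nat.card {f : α → Fin n // Monotone f}

set_option linter.unusedSectionVars false

namespace MOP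

open Polynomial

lemma orderCount_congr {β γ : Type} [PartialOrder β] [PartialOrder γ] (e : β ≃o γ) (n : ℕ) :
    orderCount β n = orderCount γ n := by
  apply Nat.card_congr
  refine ⟨fun f => ⟨f.1 ∘ e.symm, f.2.comp e.symm.monotone⟩,
          fun g => ⟨g.1 ∘ e, g.2.comp e.monotone⟩, ?_, ?_⟩ <;>
    · rintro ⟨f, hf⟩
      apply Subtype.ext
      funext x
      simp

lemma orderCount_one (β : Type) [PartialOrder β] : orderCount β 1 = 1 := by
  haveI : Subsingleton {f : β → Fin 1 // Monotone f} := by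
    constructor
    rintro ⟨f, _⟩ ⟨g, _⟩
    apply Subtype.ext
    funext x
    exact Subsingleton.elim _ _
  haveI : Nonempty {f : β → Fin 1 // Monotone f} := ⟨⟨fun _ => 0, monotone_const⟩⟩
  exact Nat.card_unique

lemma orderCount_of_isEmpty (β : Type) [PartialOrder β] [IsEmpty β] (n : ℕ) :
    orderCount β n = 1 := by
  haveI : Subsingleton {f : β → Fin n // Monotone f} := by
    constructor
    rintro ⟨f, _⟩ ⟨g, _⟩
    apply Subtype.ext
    funext x
    exact isEmptyElim x
  haveI : Nonempty {f : β → Fin n // Monotone f} :=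
    ⟨⟨fun x => isEmptyElim x, fun x => isEmptyElim x⟩⟩
  exact Nat.card_unique

lemma orderCount_zero (β : Type) [PartialOrder β] [Nonempty β] : orderCount β 0 = 0 := by
  haveI : IsEmpty {f : β → Fin 0 // Monotone f} :=
    ⟨fun f => (f.1 (Classical.arbitrary β)).elim0⟩
  exact Nat.card_of_isEmpty

section Splitting

variable {β : Type} [PartialOrder β]

set_option linter.unusedSectionVars false

open Classical in
/-- gluing function for the splitting identity -/
noncomputable def glueFun (m n : ℕ) (I : Set β)
    (g : I → Fin m) (h : (Iᶜ : Set β) → Fin n) : β → Fin (m + n) := fun x =>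
  if hx : x ∈ I then Fin.castLE (Nat.le_add_right m n) (g ⟨x, hx⟩)
  else ⟨m + (h ⟨x, hx⟩).1, by have := (h ⟨x, hx⟩).2; omega⟩

lemma glueFun_pos (m n : ℕ) (I : Set β) (g : I → Fin m) (h : (Iᶜ : Set β) → Fin n)
    {x : β} (hx : x ∈ I) : (glueFun m n I g h x : ℕ) = (g ⟨x, hx⟩ : ℕ) := by
  simp only [glueFun, dif_pos hx, Fin.coe_castLE]

lemma glueFun_neg (m n : ℕ) (I : Set β) (g : I → Fin m) (h : (Iᶜ : Set β) → Fin n)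
    {x : β} (hx : x ∉ I) : (glueFun m n I g h x : ℕ) = m + (h ⟨x, hx⟩ : ℕ) := by
  simp only [glueFun, dif_neg hx]

lemma glueFun_monotone (m n : ℕ) (I : Set β) (hI : IsLowerSet I)
    {g : I → Fin m} {h : (Iᶜ : Set β) → Fin n}
    (hg : Monotone g) (hh : Monotone h) : Monotone (glueFun m n I g h) := by
  intro x y hxy
  rw [Fin.le_def]
  by_cases hx : x ∈ I <;> by_cases hy : y ∈ I
  · rw [glueFun_pos m n I g h hx, glueFun_pos m n I g h hy]
    exact hg (show (⟨x, hx⟩ : I) ≤ ⟨y, hy⟩ from hxy)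
  · rw [glueFun_pos m n I g h hx, glueFun_neg m n I g h hy]
    have := (g ⟨x, hx⟩).2
    omega
  · exact absurd (hI hxy hy) hx
  · rw [glueFun_neg m n I g h hx, glueFun_neg m n I g h hy]
    have := hh (show ((⟨x, hx⟩ : (Iᶜ : Set β))) ≤ ⟨y, hy⟩ from hxy)
    omega

lemma glue_bijective (m n : ℕ) :
    Function.Bijective (fun z : (Σ I : {S : Set β // IsLowerSet S},
        {g : I.1 → Fin m // Monotone g} × {h : (I.1ᶜ : Set β) → Fin n // Monotone h}) =>
      (⟨glueFun m n z.1.1 z.2.1.1 z.2.2.1,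
        glueFun_monotone m n z.1.1 z.1.2 z.2.1.2 z.2.2.2⟩ :
          {f : β → Fin (m + n) // Monotone f})) := by
  constructor
  · rintro ⟨⟨I, hI⟩, ⟨g, hg⟩, ⟨h, hh⟩⟩ ⟨⟨I', hI'⟩, ⟨g', hg'⟩, ⟨h', hh'⟩⟩ hEq
    simp only [Subtype.mk.injEq] at hEq
    have hv : ∀ x : β, (glueFun m n I g h x : ℕ) = (glueFun m n I' g' h' x : ℕ) := by
      intro x
      rw [hEq]
    have hchar : ∀ (J : Set β) (gg : J → Fin m) (hh : (Jᶜ : Set β) → Fin n) (x : β),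
        x ∈ J ↔ (glueFun m n J gg hh x : ℕ) < m := by
      intro J gg hh x
      constructor
      · intro hx
        rw [glueFun_pos m n J gg hh hx]
        exact (gg ⟨x, hx⟩).2
      · intro hlt
        by_contra hx
        rw [glueFun_neg m n J gg hh hx] at hlt
        omega
    have hIeq : I = I' := by
      ext x
      rw [hchar I g h x, hchar I' g' h' x, hv x]
    subst hIeq
    have hgeq : g = g' := by
      funext y
      have := hv y.1
      rw [glueFun_pos m n I g h y.2, glueFun_pos m n I g' h' y.2] at this
      exact Fin.ext (by simpa using this)
    have hheq : h = h' := by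
      funext y
      have hy : y.1 ∉ I := y.2
      have := hv y.1
      rw [glueFun_neg m n I g h hy, glueFun_neg m n I g' h' hy] at this
      exact Fin.ext (by simpa using this)
    subst hgeq
    subst hheq
    rfl
  · rintro ⟨f, hf⟩
    have hIl : IsLowerSet {x : β | (f x : ℕ) < m} := by
      intro x x' hle hx
      have : (f x' : ℕ) ≤ (f x : ℕ) := hf hle
      simp only [Set.mem_setOf_eq] at *
      omega
    refine ⟨⟨⟨{x | (f x : ℕ) < m}, hIl⟩,
      ⟨fun y => ⟨(f y.1).1, y.2⟩, fun u v huv => hf huv⟩,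
      ⟨fun y => ⟨(f y.1).1 - m, by
        have h1 := (f y.1).2
        have h2 : ¬ (f y.1 : ℕ) < m := y.2
        omega⟩, ?_⟩⟩, ?_⟩
    · intro u v huv
      have : (f u.1 : ℕ) ≤ (f v.1 : ℕ) := hf huv
      simp only [Fin.mk_le_mk]
      have h2 : ¬ (f u.1 : ℕ) < m := u.2
      omega
    · apply Subtype.ext
      funext x
      apply Fin.ext
      show (glueFun m n {x : β | (f x : ℕ) < m} _ _ x : ℕ) = (f x : ℕ)
      by_cases hx : (f x : ℕ) < m
      · rw [glueFun_pos m n {x : β | (f x : ℕ) < m} _ _ hx]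
      · rw [glueFun_neg m n {x : β | (f x : ℕ) < m} _ _ hx]
        show m + ((f x : ℕ) - m) = (f x : ℕ)
        omega

noncomputable instance fintypeLowerSets (γ : Type) [PartialOrder γ] [Finite γ] :
    Fintype {S : Set γ // IsLowerSet S} := Fintype.ofFinite _

lemma splitting [Finite β] (m n : ℕ) :
    orderCount β (m + n)
      = ∑ I : {S : Set β // IsLowerSet S},
          orderCount I.1 m * orderCount (I.1ᶜ : Set β) n := by
  classical
  haveI : Fintype β := Fintype.ofFinite β
  haveI : ∀ I : {S : Set β // IsLowerSet S}, Fintype {g : I.1 → Fin m // Monotone g} :=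
    fun I => Fintype.ofFinite _
  haveI : ∀ I : {S : Set β // IsLowerSet S},
      Fintype {h : (I.1ᶜ : Set β) → Fin n // Monotone h} := fun I => Fintype.ofFinite _
  have := Nat.card_congr (Equiv.ofBijective _ (glue_bijective (β := β) m n))
  rw [orderCount, ← this, Nat.card_eq_fintype_card, Fintype.card_sigma]
  apply Finset.sum_congr rfl
  intro I _
  rw [Fintype.card_prod, orderCount, orderCount, Nat.card_eq_fintype_card,
    Nat.card_eq_fintype_card]

end Splitting

section Interp

open Polynomial

lemma poly_ext {p q : Polynomial ℚ} (h : ∀ n : ℕ, p.eval (n : ℚ) = q.eval (n : ℚ)) :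
    p = q := by
  have hsub : p - q = 0 := by
    apply Polynomial.eq_zero_of_infinite_isRoot
    apply Set.Infinite.mono (s := Set.range ((↑) : ℕ → ℚ))
    · rintro _ ⟨n, rfl⟩
      simp [Polynomial.IsRoot, h n]
    · exact Set.infinite_range_of_injective Nat.cast_injective
  exact sub_eq_zero.mp hsub

lemma discrete_antideriv :
    ∀ (d : ℕ) (R : Polynomial ℚ), R.natDegree ≤ d → ∀ c : ℚ,
      ∃ D : Polynomial ℚ, D.eval 0 = c ∧ ∀ x : ℚ, D.eval (x + 1) = D.eval x + R.eval x := by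
  intro d
  induction d with
  | zero =>
    intro R hR c
    have hRC : R = C (R.coeff 0) := Polynomial.eq_C_of_natDegree_le_zero hR
    refine ⟨C c + C (R.coeff 0) * X, by simp, fun x => ?_⟩
    rw [hRC]
    simp
    ring
  | succ d ih =>
    intro R hR c
    set a := R.coeff (d + 1) with ha
    set G : Polynomial ℚ := (X + 1) ^ (d + 2) - X ^ (d + 2) with hGdef
    have hGcoeff : ∀ k, G.coeff k
        = (Nat.choose (d + 2) k : ℚ) - if k = d + 2 then 1 else 0 := by
      intro k
      simp [hGdef, Polynomial.coeff_sub, Polynomial.coeff_X_add_one_pow,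
        Polynomial.coeff_X_pow]
    set R' : Polynomial ℚ := R - (a / (d + 2)) • G with hR'def
    have hR' : R'.natDegree ≤ d := by
      rw [Polynomial.natDegree_le_iff_coeff_eq_zero]
      intro k hk
      have hco : R'.coeff k = R.coeff k - (a / (d + 2)) * G.coeff k := by
        simp [hR'def, Polynomial.coeff_smul, smul_eq_mul]
      rcases eq_or_ne k (d + 1) with rfl | hne
      · rw [hco, hGcoeff]
        have h1 : ((d + 2).choose (d + 1) : ℚ) = (d + 2 : ℚ) := by
          rw [Nat.choose_succ_self_right]
          push_cast
          ring
        rw [if_neg (by omega), h1]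
        have : ((d : ℚ) + 2) ≠ 0 := by positivity
        field_simp
        rw [ha]; ring
      · have hklarge : d + 1 < k := by omega
        have hRk : R.coeff k = 0 :=
          Polynomial.coeff_eq_zero_of_natDegree_lt (lt_of_le_of_lt hR hklarge)
        have hGk : G.coeff k = 0 := by
          rw [hGcoeff]
          rcases eq_or_ne k (d + 2) with rfl | hne2
          · simp [Nat.choose_self]
          · rw [if_neg (by omega), Nat.choose_eq_zero_of_lt (by omega)]
            simp
        rw [hco, hRk, hGk]
        ring
    obtain ⟨D', hD'0, hD'⟩ := ih R' hR' c
    refine ⟨D' + (a / (d + 2)) • X ^ (d + 2), by simp [hD'0], fun x => ?_⟩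
    have hR'x : R'.eval x = R.eval x - (a / (d + 2)) * G.eval x := by
      simp [hR'def, Polynomial.eval_smul, smul_eq_mul]
    have hGx : G.eval x = (x + 1) ^ (d + 2) - x ^ (d + 2) := by
      simp [hGdef]
    simp only [Polynomial.eval_add, Polynomial.eval_smul, smul_eq_mul,
      Polynomial.eval_pow, Polynomial.eval_X, hD' x, hR'x, hGx]
    ring

lemma interp_exists :
    ∀ (N : ℕ) (β : Type) [Finite β] [PartialOrder β], Nat.card β ≤ N →
      ∃ p : Polynomial ℚ, ∀ n : ℕ, p.eval (n : ℚ) = orderCount β n := by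
  intro N
  induction N with
  | zero =>
    intro β _ _ hcard
    haveI : IsEmpty β := by
      have h0 : Nat.card β = 0 := Nat.le_zero.mp hcard
      rcases Nat.card_eq_zero.mp h0 with h | h
      · exact h
      · exact absurd ‹Finite β› h.not_finite
    exact ⟨1, fun n => by simp [orderCount_of_isEmpty]⟩
  | succ N ih =>
    intro β _ _ hcard
    classical
    by_cases hne : IsEmpty β
    · exact ⟨1, fun n => by simp [orderCount_of_isEmpty]⟩
    haveI : Nonempty β := not_isEmpty_iff.mp hne
    have hproper : ∀ I : {S : Set β // IsLowerSet S}, I.1 ≠ Set.univ →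
        Nat.card I.1 ≤ N := by
      intro I hI
      have h1 : Nat.card I.1 < Nat.card β := by
        rw [Nat.card_coe_set_eq]
        have := Set.ncard_lt_ncard (t := Set.univ)
          (Set.ssubset_univ_iff.mpr hI) Set.finite_univ
        rwa [Set.ncard_univ] at this
      omega
    have hq : ∀ I : {S : Set β // IsLowerSet S},
        ∃ p : Polynomial ℚ, I.1 ≠ Set.univ → ∀ n : ℕ, p.eval (n : ℚ) = orderCount I.1 n := by
      intro I
      by_cases hI : I.1 = Set.univ
      · exact ⟨0, fun h => absurd hI h⟩
      · obtain ⟨p, hp⟩ := ih I.1 (hproper I hI)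
        exact ⟨p, fun _ => hp⟩
    choose q hqspec using hq
    set R : Polynomial ℚ := ∑ I : {S : Set β // IsLowerSet S},
      if I.1 = Set.univ then 0 else q I with hRdef
    obtain ⟨D, hD0, hD⟩ := discrete_antideriv R.natDegree R le_rfl (orderCount β 0 : ℚ)
    refine ⟨D, ?_⟩
    intro n
    induction n with
    | zero => simpa using hD0
    | succ n ihn =>
      have hsplit := splitting (β := β) n 1
      have hcastD : ((n + 1 : ℕ) : ℚ) = (n : ℚ) + 1 := by push_cast; ring
      rw [hcastD, hD, ihn]
      have hu : (⟨Set.univ, isLowerSet_univ⟩ : {S : Set β // IsLowerSet S}) ∈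
          (Finset.univ : Finset {S : Set β // IsLowerSet S}) := Finset.mem_univ _
      have hRsum : R.eval (n : ℚ) = ∑ I : {S : Set β // IsLowerSet S},
          (if I.1 = Set.univ then (0 : ℚ) else orderCount I.1 n) := by
        rw [hRdef]
        rw [Polynomial.eval_finset_sum]
        apply Finset.sum_congr rfl
        intro I _
        by_cases hI : I.1 = Set.univ
        · simp [hI]
        · rw [if_neg hI, if_neg hI, hqspec I hI n]
      have hocsum : (orderCount β (n + 1) : ℚ)
          = ∑ I : {S : Set β // IsLowerSet S}, (orderCount I.1 n : ℚ) := by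
        rw [hsplit]
        push_cast
        apply Finset.sum_congr rfl
        intro I _
        rw [orderCount_one]
        push_cast
        ring
      rw [hocsum, hRsum]
      rw [← Finset.sum_erase_add _ _ hu, ← Finset.sum_erase_add _ _ hu]
      have huniv : (orderCount (↥(Set.univ : Set β)) n : ℚ) = (orderCount β n : ℚ) := by
        rw [orderCount_congr (OrderIso.Set.univ (α := β)) n]
      have h1 : ∑ I ∈ Finset.univ.erase
              (⟨Set.univ, isLowerSet_univ⟩ : {S : Set β // IsLowerSet S}),
            (if I.1 = Set.univ then (0:ℚ) else orderCount I.1 n)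
          = ∑ I ∈ Finset.univ.erase
              (⟨Set.univ, isLowerSet_univ⟩ : {S : Set β // IsLowerSet S}),
              (orderCount I.1 n : ℚ) := by
        apply Finset.sum_congr rfl
        intro I hI
        rw [if_neg]
        intro hIu
        exact (Finset.mem_erase.mp hI).1 (Subtype.ext hIu)
      rw [h1]
      rw [huniv]
      simp only [Finset.sum_erase_eq_sub hu, if_true]
      ring

end Interp

section Positivity

open Polynomial

lemma card_lt_of_ne_univ {β : Type} [Finite β] (S : Set β) (hS : S ≠ Set.univ) :
    Nat.card S < Nat.card β := by
  rw [Nat.card_coe_set_eq]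
  have := Set.ncard_lt_ncard (t := Set.univ) (Set.ssubset_univ_iff.mpr hS) Set.finite_univ
  rwa [Set.ncard_univ] at this

lemma pI_empty_eq_one {β : Type} [Finite β] [PartialOrder β] (S : Set β) (hS : S = ∅)
    (p : Polynomial ℚ) (hp : ∀ n : ℕ, p.eval (n : ℚ) = orderCount S n) : p = 1 := by
  apply poly_ext
  intro n
  haveI : IsEmpty S := by rw [hS]; exact Set.isEmpty_coe_sort.mpr rfl
  rw [hp n, orderCount_of_isEmpty]
  simp

lemma univariate_coeff_nonneg
    (F : (α : Type) → [Finite α] → [PartialOrder α] → Prop)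
    (hideal : ∀ (α : Type) [Finite α] [PartialOrder α],
      F α → ∀ I : Set α, IsLowerSet I → F I)
    (hfilter : ∀ (α : Type) [Finite α] [PartialOrder α],
      F α → ∀ I : Set α, IsUpperSet I → F I)
    (hlin : ∀ (α : Type) [Finite α] [PartialOrder α], F α →
      ∀ Ω : Polynomial ℚ, (∀ n : ℕ, 1 ≤ n → Ω.eval (n : ℚ) = orderCount α n) →
        0 ≤ Ω.coeff 1) :
    ∀ (N : ℕ) (β : Type) [Finite β] [PartialOrder β], Nat.card β ≤ N → F β →
      ∀ p : Polynomial ℚ, (∀ n : ℕ, p.eval (n : ℚ) = orderCount β n) →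
      ∀ k : ℕ, 0 ≤ p.coeff k := by
  intro N
  induction N with
  | zero =>
    intro β _ _ hcard hF p hp k
    haveI : IsEmpty β := by
      have h0 : Nat.card β = 0 := Nat.le_zero.mp hcard
      rcases Nat.card_eq_zero.mp h0 with h | h
      · exact h
      · exact absurd ‹Finite β› h.not_finite
    have hp1 : p = 1 := poly_ext (fun n => by rw [hp n, orderCount_of_isEmpty]; simp)
    rw [hp1, Polynomial.coeff_one]
    split <;> norm_num
  | succ N ih =>
    intro β _ _ hcard hF p hp k
    classical
    match k with
    | 0 =>
      rw [Polynomial.coeff_zero_eq_eval_zero]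
      have := hp 0
      push_cast at this
      rw [this]
      positivity
    | 1 => exact hlin β hF p (fun n _ => hp n)
    | (j + 2) =>
      choose pI hpI using fun I : {S : Set β // IsLowerSet S} =>
        interp_exists (Nat.card I.1) I.1 le_rfl
      choose pC hpC using fun I : {S : Set β // IsLowerSet S} =>
        interp_exists (Nat.card (I.1ᶜ : Set β)) (I.1ᶜ : Set β) le_rfl
      -- Step 1+2: pointwise coefficient identity
      have step2 : ∀ m : ℕ, (Polynomial.hasseDeriv 1 p).eval (m : ℚ)
          = ∑ I : {S : Set β // IsLowerSet S}, (pI I).eval (m : ℚ) * (pC I).coeff 1 := by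
        intro m
        have step1 : Polynomial.taylor (m : ℚ) p
            = ∑ I : {S : Set β // IsLowerSet S}, (pI I).eval (m : ℚ) • pC I := by
          apply poly_ext
          intro n
          rw [Polynomial.taylor_eval]
          have hcast : ((n : ℚ) + (m : ℚ)) = ((m + n : ℕ) : ℚ) := by push_cast; ring
          rw [hcast, hp (m + n), splitting m n]
          rw [Polynomial.eval_finset_sum]
          push_cast
          apply Finset.sum_congr rfl
          intro I _
          rw [Polynomial.eval_smul, smul_eq_mul, hpI I m, hpC I n]
        have := congrArg (fun q : Polynomial ℚ => q.coeff 1) step1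
        simp only [Polynomial.taylor_coeff] at this
        rw [this, Polynomial.finset_sum_coeff]
        apply Finset.sum_congr rfl
        intro I _
        rw [Polynomial.coeff_smul, smul_eq_mul]
      have step3 : Polynomial.hasseDeriv 1 p
          = ∑ I : {S : Set β // IsLowerSet S}, ((pC I).coeff 1) • pI I := by
        apply poly_ext
        intro m
        rw [step2 m, Polynomial.eval_finset_sum]
        apply Finset.sum_congr rfl
        intro I _
        rw [Polynomial.eval_smul, smul_eq_mul]
        ring
      have step4 := congrArg (fun q : Polynomial ℚ => q.coeff (j + 1)) step3
      simp only [Polynomial.hasseDeriv_coeff, Polynomial.finset_sum_coeff,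
        Polynomial.coeff_smul, smul_eq_mul] at step4
      have hterm : ∀ I : {S : Set β // IsLowerSet S},
          0 ≤ (pC I).coeff 1 * (pI I).coeff (j + 1) := by
        intro I
        by_cases hIuniv : I.1 = Set.univ
        · have hCempty : (I.1ᶜ : Set β) = ∅ := by rw [hIuniv, Set.compl_univ]
          have : pC I = 1 := pI_empty_eq_one _ hCempty (pC I) (hpC I)
          rw [this, Polynomial.coeff_one]
          norm_num
        by_cases hIempty : I.1 = ∅
        · have : pI I = 1 := pI_empty_eq_one _ hIempty (pI I) (hpI I)
          rw [this, Polynomial.coeff_one]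
          norm_num
        · have hFI : F I.1 := hideal β hF I.1 I.2
          have hFC : F (I.1ᶜ : Set β) := hfilter β hF (I.1ᶜ) I.2.compl
          have hcardI : Nat.card I.1 ≤ N := by
            have := card_lt_of_ne_univ I.1 hIuniv
            omega
          have hcardC : Nat.card (I.1ᶜ : Set β) ≤ N := by
            have hne : I.1ᶜ ≠ Set.univ := by
              intro h
              apply hIempty
              rw [← compl_compl I.1, h, Set.compl_univ]
            have := card_lt_of_ne_univ (I.1ᶜ) hne
            omega
          exact mul_nonneg (ih (I.1ᶜ : Set β) hcardC hFC (pC I) (hpC I) 1)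
            (ih I.1 hcardI hFI (pI I) (hpI I) (j + 1))
      have hsum : 0 ≤ ∑ I : {S : Set β // IsLowerSet S},
          (pC I).coeff 1 * (pI I).coeff (j + 1) := Finset.sum_nonneg fun I _ => hterm I
      rw [← step4] at hsum
      have hcpos : (0 : ℚ) < ((j + 1 + 1).choose 1 : ℚ) := by
        have : 0 < (j + 1 + 1).choose 1 := Nat.choose_pos (by omega)
        exact_mod_cast this
      nlinarith [hsum, hcpos]

end Positivity

section Multivariate

open Classical in
/-- The blocks of a type assignment: elements of type `i.succ` not above the
marked element `a i.succ`. -/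
def QSet {α : Type} [PartialOrder α] {r : ℕ} (a : Fin (r + 1) → α)
    (τ : α → Fin (r + 1)) (i : Fin r) : Set α :=
  {p | τ p = i.succ ∧ ¬ a i.succ ≤ p}

/-- Lengths of the marked intervals. -/
def tdiff {α : Type} {r : ℕ} (a : Fin (r + 1) → α) (lam : α → ℤ) (i : Fin r) : ℕ :=
  (lam (a i.succ) - lam (a i.castSucc)).toNat

variable {α : Type} [Finite α] [PartialOrder α] {r : ℕ}
  {a : Fin (r + 1) → α} {lam : α → ℤ}

open Classical in
/-- glue a type assignment and block maps into a single order preserving map. -/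
noncomputable def mglue (a : Fin (r + 1) → α) (lam : α → ℤ) (τ : α → Fin (r + 1))
    (s : ∀ i : Fin r, ↥(QSet a τ i) → Fin (tdiff a lam i)) : α → ℤ := fun p =>
  if a (τ p) ≤ p then lam (a (τ p))
  else ∑ i : Fin r, if hp : p ∈ QSet a τ i
    then lam (a i.castSucc) + 1 + ((s i ⟨p, hp⟩ : ℕ) : ℤ) else 0

lemma mglue_pos {τ : α → Fin (r + 1)}
    {s : ∀ i : Fin r, ↥(QSet a τ i) → Fin (tdiff a lam i)} {p : α}
    (h : a (τ p) ≤ p) : mglue a lam τ s p = lam (a (τ p)) := by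
  rw [mglue, if_pos h]

lemma mglue_neg {τ : α → Fin (r + 1)}
    {s : ∀ i : Fin r, ↥(QSet a τ i) → Fin (tdiff a lam i)} {p : α} {i : Fin r}
    (hp : p ∈ QSet a τ i) :
    mglue a lam τ s p = lam (a i.castSucc) + 1 + ((s i ⟨p, hp⟩ : ℕ) : ℤ) := by
  classical
  have hnle : ¬ a (τ p) ≤ p := by rw [hp.1]; exact hp.2
  rw [mglue, if_neg hnle]
  rw [Finset.sum_eq_single i]
  · rw [dif_pos hp]
  · intro j _ hj
    rw [dif_neg]
    intro hpj
    exact hj (Fin.succ_injective _ (hpj.1.symm.trans hp.1))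
  · intro h
    exact absurd (Finset.mem_univ i) h

section TauProps

variable {τ : α → Fin (r + 1)}

lemma le_tau (hτm : Monotone τ) (hτa : ∀ j, τ (a j) = j) {p : α} {j : Fin (r + 1)}
    (hj : a j ≤ p) : j ≤ τ p := by
  rw [← hτa j]
  exact hτm hj

lemma tau_zero (hb : ∀ p : α, ∃ j, a j ≤ p) (hτm : Monotone τ) (hτa : ∀ j, τ (a j) = j)
    {p : α} (h0 : τ p = 0) : a 0 ≤ p := by
  obtain ⟨j, hj⟩ := hb p
  have := le_tau hτm hτa hj
  rw [h0, Fin.le_zero_iff] at this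
  rwa [← this]

lemma mem_QSet_of_not_le (hb : ∀ p : α, ∃ j, a j ≤ p) (hτm : Monotone τ)
    (hτa : ∀ j, τ (a j) = j) {p : α} (h : ¬ a (τ p) ≤ p) :
    ∃ i : Fin r, p ∈ QSet a τ i := by
  have h0 : τ p ≠ 0 := by
    intro h0
    exact h (by rw [h0]; exact tau_zero hb hτm hτa h0)
  refine ⟨(τ p).pred h0, (Fin.succ_pred _ _).symm, ?_⟩
  rw [Fin.succ_pred]
  exact h

end TauProps

section GlueBounds

variable {τ : α → Fin (r + 1)}
  {s : ∀ i : Fin r, ↥(QSet a τ i) → Fin (tdiff a lam i)}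

lemma tdiff_cast (hmono : ∀ i j : Fin (r + 1), i ≤ j → lam (a i) ≤ lam (a j)) (i : Fin r) :
    (tdiff a lam i : ℤ) = lam (a i.succ) - lam (a i.castSucc) := by
  rw [tdiff, Int.toNat_of_nonneg]
  exact sub_nonneg.mpr (hmono _ _ (Fin.castSucc_le_succ i))

lemma mglue_gt_of_mem {p : α} {i : Fin r} (hp : p ∈ QSet a τ i) :
    lam (a i.castSucc) < mglue a lam τ s p := by
  rw [mglue_neg hp]
  have : (0 : ℤ) ≤ ((s i ⟨p, hp⟩ : ℕ) : ℤ) := Int.ofNat_nonneg _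
  omega

lemma mglue_le_of_mem (hmono : ∀ i j : Fin (r + 1), i ≤ j → lam (a i) ≤ lam (a j))
    {p : α} {i : Fin r} (hp : p ∈ QSet a τ i) :
    mglue a lam τ s p ≤ lam (a i.succ) := by
  rw [mglue_neg hp]
  have h1 : ((s i ⟨p, hp⟩ : ℕ) : ℤ) < (tdiff a lam i : ℤ) := by
    exact_mod_cast (s i ⟨p, hp⟩).isLt
  rw [tdiff_cast hmono] at h1
  omega

lemma mglue_le (hb : ∀ p : α, ∃ j, a j ≤ p) (hτm : Monotone τ) (hτa : ∀ j, τ (a j) = j)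
    (hmono : ∀ i j : Fin (r + 1), i ≤ j → lam (a i) ≤ lam (a j)) (p : α) :
    mglue a lam τ s p ≤ lam (a (τ p)) := by
  by_cases h : a (τ p) ≤ p
  · rw [mglue_pos h]
  · obtain ⟨i, hp⟩ := mem_QSet_of_not_le hb hτm hτa h
    have := mglue_le_of_mem (s := s) hmono hp
    rw [hp.1]
    exact this

lemma mglue_monotone (hb : ∀ p : α, ∃ j, a j ≤ p) (hτm : Monotone τ)
    (hτa : ∀ j, τ (a j) = j)
    (hmono : ∀ i j : Fin (r + 1), i ≤ j → lam (a i) ≤ lam (a j))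
    (hs : ∀ i, Monotone (s i)) : Monotone (mglue a lam τ s) := by
  intro p q hpq
  rcases lt_or_eq_of_le (hτm hpq) with hlt | heq
  · -- τ p < τ q
    have h1 : mglue a lam τ s p ≤ lam (a (τ p)) := mglue_le hb hτm hτa hmono p
    by_cases hq : a (τ q) ≤ q
    · rw [mglue_pos hq]
      exact le_trans h1 (hmono _ _ hlt.le)
    · obtain ⟨i, hqi⟩ := mem_QSet_of_not_le hb hτm hτa hq
      have h2 : lam (a i.castSucc) < mglue a lam τ s q := mglue_gt_of_mem hqi
      have h3 : τ p ≤ i.castSucc := by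
        rw [Fin.le_castSucc_iff, ← hqi.1]
        exact hlt
      have h4 : lam (a (τ p)) ≤ lam (a i.castSucc) := hmono _ _ h3
      omega
  · -- τ p = τ q
    by_cases hp : a (τ p) ≤ p
    · by_cases hq : a (τ q) ≤ q
      · rw [mglue_pos hp, mglue_pos hq, heq]
      · exact absurd (heq ▸ le_trans hp hpq) hq
    · by_cases hq : a (τ q) ≤ q
      · have h1 : mglue a lam τ s p ≤ lam (a (τ p)) := mglue_le hb hτm hτa hmono p
        rw [mglue_pos hq, ← heq]
        exact h1
      · obtain ⟨i, hpi⟩ := mem_QSet_of_not_le hb hτm hτa hp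
        obtain ⟨j, hqj⟩ := mem_QSet_of_not_le hb hτm hτa hq
        have hij : i = j := by
          apply Fin.succ_injective
          rw [← hpi.1, ← hqj.1, heq]
        subst hij
        rw [mglue_neg hpi, mglue_neg hqj]
        have := hs i (show (⟨p, hpi⟩ : (QSet a τ i : Set α)) ≤ ⟨q, hqj⟩ from hpq)
        have hval : ((s i ⟨p, hpi⟩ : ℕ) : ℤ) ≤ ((s i ⟨q, hqj⟩ : ℕ) : ℤ) := by
          exact_mod_cast this
        omega

lemma mglue_marked (hτa : ∀ j, τ (a j) = j) (j : Fin (r + 1)) :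
    mglue a lam τ s (a j) = lam (a j) := by
  have h : a (τ (a j)) ≤ a j := by rw [hτa j]
  rw [mglue_pos h, hτa j]

end GlueBounds

section Recover

open Classical in
/-- largest marked index below `p`. -/
noncomputable def dIdx (a : Fin (r + 1) → α) (hb : ∀ p : α, ∃ j, a j ≤ p) (p : α) :
    Fin (r + 1) :=
  (Finset.univ.filter fun j => a j ≤ p).max' (by
    obtain ⟨j, hj⟩ := hb p
    exact ⟨j, Finset.mem_filter.mpr ⟨Finset.mem_univ _, hj⟩⟩)

lemma a_dIdx_le (hb : ∀ p : α, ∃ j, a j ≤ p) (p : α) : a (dIdx a hb p) ≤ p := by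
  classical
  have := Finset.max'_mem (Finset.univ.filter fun j => a j ≤ p) (by
    obtain ⟨j, hj⟩ := hb p
    exact ⟨j, Finset.mem_filter.mpr ⟨Finset.mem_univ _, hj⟩⟩)
  have h2 := Finset.mem_filter.mp this
  convert h2.2
  unfold dIdx; congr

lemma le_dIdx (hb : ∀ p : α, ∃ j, a j ≤ p) {p : α} {j : Fin (r + 1)} (hj : a j ≤ p) :
    j ≤ dIdx a hb p := by
  classical
  apply Finset.le_max'
  exact Finset.mem_filter.mpr ⟨Finset.mem_univ _, by convert hj⟩

open Classical in
/-- smallest marked index whose value bounds `f p` from above. -/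
noncomputable def mIdx (a : Fin (r + 1) → α) (lam : α → ℤ) (f : α → ℤ)
    (hfa : ∀ p : α, ∃ i, f p ≤ lam (a i)) (p : α) : Fin (r + 1) :=
  (Finset.univ.filter fun i => f p ≤ lam (a i)).min' (by
    obtain ⟨i, hi⟩ := hfa p
    exact ⟨i, Finset.mem_filter.mpr ⟨Finset.mem_univ _, hi⟩⟩)

lemma f_le_mIdx (lam : α → ℤ) (f : α → ℤ) (hfa : ∀ p : α, ∃ i, f p ≤ lam (a i)) (p : α) :
    f p ≤ lam (a (mIdx a lam f hfa p)) := by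
  classical
  have := Finset.min'_mem (Finset.univ.filter fun i => f p ≤ lam (a i)) (by
    obtain ⟨i, hi⟩ := hfa p
    exact ⟨i, Finset.mem_filter.mpr ⟨Finset.mem_univ _, hi⟩⟩)
  have h2 := Finset.mem_filter.mp this
  convert h2.2
  unfold mIdx; congr

lemma mIdx_le (lam : α → ℤ) (f : α → ℤ) (hfa : ∀ p : α, ∃ i, f p ≤ lam (a i)) {p : α}
    {i : Fin (r + 1)} (hi : f p ≤ lam (a i)) : mIdx a lam f hfa p ≤ i := by
  classical
  apply Finset.min'_le
  exact Finset.mem_filter.mpr ⟨Finset.mem_univ _, by convert hi⟩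

/-- the type assignment recovered from an order preserving extension. -/
noncomputable def tauF (a : Fin (r + 1) → α) (lam : α → ℤ) (hb : ∀ p : α, ∃ j, a j ≤ p)
    (f : α → ℤ) (hfa : ∀ p : α, ∃ i, f p ≤ lam (a i)) (p : α) : Fin (r + 1) :=
  max (dIdx a hb p) (mIdx a lam f hfa p)

variable {f : α → ℤ}

lemma tauF_monotone (hb : ∀ p : α, ∃ j, a j ≤ p)
    (hfa : ∀ p : α, ∃ i, f p ≤ lam (a i)) (hf : Monotone f) :
    Monotone (tauF a lam hb f hfa) := by
  intro p q hpq
  apply max_le_max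
  · exact le_dIdx hb (le_trans (a_dIdx_le hb p) hpq)
  · exact mIdx_le lam f hfa (le_trans (hf hpq) (f_le_mIdx lam f hfa q))

lemma tauF_marked (hb : ∀ p : α, ∃ j, a j ≤ p)
    (hidx : ∀ j k : Fin (r + 1), a k ≤ a j → k ≤ j)
    (hfa : ∀ p : α, ∃ i, f p ≤ lam (a i))
    (hmark : ∀ j, f (a j) = lam (a j)) (j : Fin (r + 1)) :
    tauF a lam hb f hfa (a j) = j := by
  apply le_antisymm
  · apply max_le
    · exact hidx j _ (a_dIdx_le hb (a j))
    · exact mIdx_le lam f hfa (le_of_eq (hmark j))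
  · exact le_trans (le_dIdx hb (le_refl (a j))) (le_max_left _ _)

lemma tauF_eq_of_marked_le (hb : ∀ p : α, ∃ j, a j ≤ p)
    (hmono : ∀ i j : Fin (r + 1), i ≤ j → lam (a i) ≤ lam (a j))
    (hfa : ∀ p : α, ∃ i, f p ≤ lam (a i))
    (hf : Monotone f) (hmark : ∀ j, f (a j) = lam (a j)) {p : α}
    (h : a (tauF a lam hb f hfa p) ≤ p) : f p = lam (a (tauF a lam hb f hfa p)) := by
  apply le_antisymm
  · exact le_trans (f_le_mIdx lam f hfa p) (hmono _ _ (le_max_right _ _))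
  · rw [← hmark (tauF a lam hb f hfa p)]
    exact hf h

lemma tauF_not_le (hb : ∀ p : α, ∃ j, a j ≤ p)
    (hfa : ∀ p : α, ∃ i, f p ≤ lam (a i)) {p : α}
    (h : ¬ a (tauF a lam hb f hfa p) ≤ p) :
    ∃ i : Fin r, tauF a lam hb f hfa p = i.succ
      ∧ lam (a i.castSucc) < f p ∧ f p ≤ lam (a i.succ) ∧ ¬ a i.succ ≤ p := by
  have hdm : dIdx a hb p < mIdx a lam f hfa p := by
    rcases lt_or_ge (dIdx a hb p) (mIdx a lam f hfa p) with h1 | h1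
    · exact h1
    · exfalso
      apply h
      have : tauF a lam hb f hfa p = dIdx a hb p := by
        rw [tauF, max_eq_left h1]
      rw [this]
      exact a_dIdx_le hb p
  have htau : tauF a lam hb f hfa p = mIdx a lam f hfa p := by
    rw [tauF, max_eq_right hdm.le]
  have h0 : mIdx a lam f hfa p ≠ 0 := by
    intro h0
    rw [h0] at hdm
    exact absurd hdm (Fin.not_lt_zero _).elim
  refine ⟨(mIdx a lam f hfa p).pred h0, by rw [htau, Fin.succ_pred], ?_, ?_, ?_⟩
  · by_contra hcon
    push_neg at hcon
    have := mIdx_le lam f hfa hcon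
    have h2 : mIdx a lam f hfa p ≤ ((mIdx a lam f hfa p).pred h0).castSucc := this
    rw [Fin.le_castSucc_iff, Fin.succ_pred] at h2
    exact lt_irrefl _ h2
  · rw [Fin.succ_pred]
    exact f_le_mIdx lam f hfa p
  · rw [Fin.succ_pred]
    rw [← htau]
    exact h

end Recover

end Multivariate

section Bijection

variable {α : Type} [Finite α] [PartialOrder α] {r : ℕ}
  {a : Fin (r + 1) → α} {lam : α → ℤ}

lemma tauF_congr (hb : ∀ p : α, ∃ j, a j ≤ p) {f f' : α → ℤ}
    (hfa : ∀ p : α, ∃ i, f p ≤ lam (a i)) (hfa' : ∀ p : α, ∃ i, f' p ≤ lam (a i))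
    (h : f = f') (p : α) : tauF a lam hb f hfa p = tauF a lam hb f' hfa' p := by
  subst h
  rfl

lemma tauF_mglue (hb : ∀ p : α, ∃ j, a j ≤ p)
    (hmono : ∀ i j : Fin (r + 1), i ≤ j → lam (a i) ≤ lam (a j))
    {τ : α → Fin (r + 1)} (hτm : Monotone τ) (hτa : ∀ j, τ (a j) = j)
    (s : ∀ i : Fin r, ↥(QSet a τ i) → Fin (tdiff a lam i))
    (hfa : ∀ p : α, ∃ i, mglue a lam τ s p ≤ lam (a i)) (p : α) :
    tauF a lam hb (mglue a lam τ s) hfa p = τ p := by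
  have hd_le : dIdx a hb p ≤ τ p := le_tau hτm hτa (a_dIdx_le hb p)
  by_cases h : a (τ p) ≤ p
  · have hfp : mglue a lam τ s p = lam (a (τ p)) := mglue_pos h
    have hd_ge : τ p ≤ dIdx a hb p := le_dIdx hb h
    have hm_le : mIdx a lam (mglue a lam τ s) hfa p ≤ τ p :=
      mIdx_le lam _ hfa (le_of_eq hfp)
    apply le_antisymm
    · exact max_le hd_le hm_le
    · exact le_trans hd_ge (le_max_left _ _)
  · obtain ⟨i, hp⟩ := mem_QSet_of_not_le hb hτm hτa h
    have hub : mglue a lam τ s p ≤ lam (a i.succ) := mglue_le_of_mem hmono hp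
    have hlb : lam (a i.castSucc) < mglue a lam τ s p := mglue_gt_of_mem hp
    have hm_le : mIdx a lam (mglue a lam τ s) hfa p ≤ i.succ := mIdx_le lam _ hfa hub
    have hm_ge : i.succ ≤ mIdx a lam (mglue a lam τ s) hfa p := by
      by_contra hcon
      push_neg at hcon
      have h2 : mIdx a lam (mglue a lam τ s) hfa p ≤ i.castSucc :=
        Fin.le_castSucc_iff.mpr hcon
      have h3 := le_trans (f_le_mIdx lam (mglue a lam τ s) hfa p) (hmono _ _ h2)
      omega
    have hm : mIdx a lam (mglue a lam τ s) hfa p = i.succ := le_antisymm hm_le hm_ge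
    rw [tauF, hm, hp.1]
    exact max_eq_right (hp.1 ▸ hd_le)

lemma mglue_hfa (hab : ∀ p : α, ∃ j, p ≤ a j)
    {f : α → ℤ} (hf : Monotone f) (hmark : ∀ j, f (a j) = lam (a j)) :
    ∀ p : α, ∃ i, f p ≤ lam (a i) := by
  intro p
  obtain ⟨j, hj⟩ := hab p
  exact ⟨j, le_trans (hf hj) (le_of_eq (hmark j))⟩

lemma mvglue_bijective (hb : ∀ p : α, ∃ j, a j ≤ p) (hab : ∀ p : α, ∃ j, p ≤ a j)
    (hidx : ∀ j k : Fin (r + 1), a k ≤ a j → k ≤ j)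
    (hmono : ∀ i j : Fin (r + 1), i ≤ j → lam (a i) ≤ lam (a j)) :
    Function.Bijective
      (fun z : (Σ τ : {τ : α → Fin (r + 1) // Monotone τ ∧ ∀ j, τ (a j) = j},
          ∀ i : Fin r, {s : ↥(QSet a τ.1 i) → Fin (tdiff a lam i) // Monotone s}) =>
        (⟨mglue a lam z.1.1 (fun i => (z.2 i).1),
          mglue_monotone hb z.1.2.1 z.1.2.2 hmono (fun i => (z.2 i).2),
          fun b hbmem => by
            obtain ⟨j, rfl⟩ := hbmem
            exact mglue_marked z.1.2.2 j⟩ :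
          {f : α → ℤ // Monotone f ∧ ∀ b ∈ Set.range a, f b = lam b})) := by
  constructor
  · rintro ⟨τ, s⟩ ⟨τ', s'⟩ hEq
    simp only [Subtype.mk.injEq] at hEq
    have hffun : mglue a lam τ.1 (fun i => (s i).1) = mglue a lam τ'.1 (fun i => (s' i).1) :=
      hEq
    have hfa : ∀ p : α, ∃ i, mglue a lam τ.1 (fun i => (s i).1) p ≤ lam (a i) :=
      fun p => ⟨τ.1 p, mglue_le hb τ.2.1 τ.2.2 hmono p⟩
    have hfa' : ∀ p : α, ∃ i, mglue a lam τ'.1 (fun i => (s' i).1) p ≤ lam (a i) :=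
      fun p => ⟨τ'.1 p, mglue_le hb τ'.2.1 τ'.2.2 hmono p⟩
    have hτeq : τ = τ' := by
      apply Subtype.ext
      funext p
      rw [← tauF_mglue hb hmono τ.2.1 τ.2.2 (fun i => (s i).1) hfa p,
        tauF_congr hb hfa hfa' hffun p,
        tauF_mglue hb hmono τ'.2.1 τ'.2.2 (fun i => (s' i).1) hfa' p]
    subst hτeq
    have hseq : s = s' := by
      funext i
      apply Subtype.ext
      funext y
      have hy := congrFun hffun y.1
      rw [mglue_neg (s := fun i => (s i).1) y.2, mglue_neg (s := fun i => (s' i).1) y.2] at hy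
      have : (((s i).1 ⟨y.1, y.2⟩ : ℕ) : ℤ) = (((s' i).1 ⟨y.1, y.2⟩ : ℕ) : ℤ) := by omega
      exact Fin.ext (by exact_mod_cast this)
    rw [hseq]
  · rintro ⟨f, hfm, hfmark⟩
    have hmark' : ∀ j, f (a j) = lam (a j) := fun j => hfmark (a j) ⟨j, rfl⟩
    have hfa : ∀ p : α, ∃ i, f p ≤ lam (a i) := mglue_hfa hab hfm hmark'
    refine ⟨⟨⟨tauF a lam hb f hfa, tauF_monotone hb hfa hfm,
      tauF_marked hb hidx hfa hmark'⟩, fun i =>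
        ⟨fun y => ⟨(f y.1 - lam (a i.castSucc) - 1).toNat, by
          have hy21 : tauF a lam hb f hfa (y : α) = i.succ := y.2.1
          have hy22 : ¬ a i.succ ≤ (y : α) := y.2.2
          have hnle : ¬ a (tauF a lam hb f hfa (y : α)) ≤ (y : α) := by
            rw [hy21]
            exact hy22
          obtain ⟨i', hi', hlb, hub, _⟩ := tauF_not_le hb hfa hnle
          have hii : i' = i := Fin.succ_injective _ (hi'.symm.trans y.2.1)
          subst hii
          have tc := tdiff_cast (a := a) (lam := lam) hmono i'
          omega⟩, by
          intro y y' hy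
          simp only [Fin.mk_le_mk]
          have := hfm (show (y : α) ≤ (y' : α) from hy)
          omega⟩⟩, ?_⟩
    apply Subtype.ext
    dsimp only
    funext p
    by_cases h : a (tauF a lam hb f hfa p) ≤ p
    · rw [mglue_pos h]
      exact (tauF_eq_of_marked_le hb hmono hfa hfm hmark' h).symm
    · obtain ⟨i, hi, hlb, hub, hnle⟩ := tauF_not_le hb hfa h
      have hp : p ∈ QSet a (tauF a lam hb f hfa) i := ⟨hi, hnle⟩
      rw [mglue_neg hp]
      dsimp only
      omega

lemma marked_split (hb : ∀ p : α, ∃ j, a j ≤ p) (hab : ∀ p : α, ∃ j, p ≤ a j)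
    (hidx : ∀ j k : Fin (r + 1), a k ≤ a j → k ≤ j)
    (hmono : ∀ i j : Fin (r + 1), i ≤ j → lam (a i) ≤ lam (a j))
    [Fintype {τ : α → Fin (r + 1) // Monotone τ ∧ ∀ j, τ (a j) = j}] :
    markedCount (Set.range a) lam
      = ∑ τ : {τ : α → Fin (r + 1) // Monotone τ ∧ ∀ j, τ (a j) = j},
          ∏ i : Fin r, orderCount (QSet a τ.1 i) (tdiff a lam i) := by
  classical
  have hcong := Nat.card_congr (Equiv.ofBijective _ (mvglue_bijective hb hab hidx hmono))
  rw [markedCount, ← hcong]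
  haveI : ∀ τ : {τ : α → Fin (r + 1) // Monotone τ ∧ ∀ j, τ (a j) = j},
      Fintype (∀ i : Fin r, {s : ↥(QSet a τ.1 i) → Fin (tdiff a lam i) // Monotone s}) :=
    fun τ => Fintype.ofFinite _
  rw [Nat.card_eq_fintype_card, Fintype.card_sigma]
  apply Finset.sum_congr rfl
  intro τ _
  rw [← Nat.card_eq_fintype_card, Nat.card_pi]
  apply Finset.prod_congr rfl
  intro i _
  rfl

end Bijection

section Membership

variable {α : Type} [Finite α] [PartialOrder α] {r : ℕ} {a : Fin (r + 1) → α}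

lemma F_QSet (F : (α : Type) → [Finite α] → [PartialOrder α] → Prop)
    (hiso : ∀ (α β : Type) [Finite α] [PartialOrder α] [Finite β] [PartialOrder β],
      F α → Nonempty (α ≃o β) → F β)
    (hideal : ∀ (α : Type) [Finite α] [PartialOrder α],
      F α → ∀ I : Set α, IsLowerSet I → F I)
    (hfilter : ∀ (α : Type) [Finite α] [PartialOrder α],
      F α → ∀ I : Set α, IsUpperSet I → F I)
    (hP : F α) (τ : α → Fin (r + 1)) (hτm : Monotone τ) (i : Fin r) :
    F ↥(QSet a τ i) := by
  set U : Set α := {p | i.succ ≤ τ p} with hUdef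
  have hU : IsUpperSet U := fun p q hpq hp => le_trans hp (hτm hpq)
  have hFU : F ↥U := hfilter α hP U hU
  set D : Set ↥U := {y | (y : α) ∈ QSet a τ i} with hDdef
  have hD : IsLowerSet D := by
    rintro ⟨y, hyU⟩ ⟨y', hy'U⟩ hle hyD
    constructor
    · apply le_antisymm
      · exact le_of_le_of_eq (hτm hle) hyD.1
      · exact hy'U
    · intro hcon
      exact hyD.2 (le_trans hcon hle)
  have hFD : F ↥D := hideal ↥U hFU D hD
  apply hiso ↥D ↥(QSet a τ i) hFD
  exact ⟨{ toFun := fun y => ⟨y.1.1, y.2⟩,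
           invFun := fun p => ⟨⟨p.1, le_of_eq p.2.1.symm⟩, p.2⟩,
           left_inv := fun y => rfl,
           right_inv := fun p => rfl,
           map_rel_iff' := Iff.rfl }⟩

end Membership

section MvHelpers

open Polynomial MvPolynomial

lemma mv_coeff_aeval_nonneg {r : ℕ} (p : Polynomial ℚ) (hp : ∀ k, 0 ≤ p.coeff k)
    (i : Fin r) (m : Fin r →₀ ℕ) :
    0 ≤ MvPolynomial.coeff m (Polynomial.aeval (MvPolynomial.X i : MvPolynomial (Fin r) ℚ) p) := by
  classical
  rw [Polynomial.aeval_def, Polynomial.eval₂_eq_sum, Polynomial.sum_def,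
    MvPolynomial.coeff_sum]
  apply Finset.sum_nonneg
  intro k _
  rw [MvPolynomial.algebraMap_eq, MvPolynomial.coeff_C_mul, MvPolynomial.coeff_X_pow]
  apply mul_nonneg (hp k)
  split <;> norm_num

lemma mv_eval_aeval {r : ℕ} (p : Polynomial ℚ) (v : Fin r → ℚ) (i : Fin r) :
    MvPolynomial.eval v (Polynomial.aeval (MvPolynomial.X i : MvPolynomial (Fin r) ℚ) p)
      = p.eval (v i) := by
  rw [Polynomial.aeval_def, Polynomial.eval₂_eq_sum, Polynomial.sum_def, map_sum,
    Polynomial.eval_eq_sum, Polynomial.sum_def]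
  apply Finset.sum_congr rfl
  intro k _
  rw [map_mul, map_pow, MvPolynomial.eval_X, MvPolynomial.algebraMap_eq, MvPolynomial.eval_C]

lemma mv_prod_coeff_nonneg {r : ℕ} {ι : Type*} (s : Finset ι) (f : ι → MvPolynomial (Fin r) ℚ)
    (hf : ∀ i ∈ s, ∀ m, 0 ≤ (f i).coeff m) : ∀ m, 0 ≤ (∏ i ∈ s, f i).coeff m := by
  classical
  induction s using Finset.induction with
  | empty =>
    intro m
    rw [Finset.prod_empty, MvPolynomial.coeff_one]
    split <;> norm_num
  | insert _ _ hx ih =>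
    intro m
    rw [Finset.prod_insert hx, MvPolynomial.coeff_mul]
    apply Finset.sum_nonneg
    intro km _
    exact mul_nonneg (hf _ (Finset.mem_insert_self _ _) _)
      (ih (fun j hj m' => hf j (Finset.mem_insert_of_mem hj) m') _)

end MvHelpers

end MOP

/-- **Theorem (multivariate Ehrhart positivity for marked order polytopes).**
Let `F` be a family of finite posets closed under isomorphism, ideals and filters,
such that for every member the linear coefficient of the order polynomial is
nonnegative.  Then for any member `P`, any subposet `A ⊆ P` containing all minima
and maxima, and any natural labeling `A = {a_0, …, a_r}`, there is a polynomial
`f ∈ ℚ[t_1, …, t_r]` with nonnegative coefficients with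
`Ω_{P,A}(λ) = f(λ(a_1) − λ(a_0), …, λ(a_r) − λ(a_{r−1}))`
for every `λ : A → ℤ` with `λ(a_0) ≤ λ(a_1) ≤ ⋯ ≤ λ(a_r)`. -/

theorem marked_order_multivariate_positivity
    (F : (α : Type) → [Finite α] → [PartialOrder α] → Prop)
    (hiso : ∀ (α β : Type) [Finite α] [PartialOrder α] [Finite β] [PartialOrder β],
      F α → Nonempty (α ≃o β) → F β)
    (hideal : ∀ (α : Type) [Finite α] [PartialOrder α],
      F α → ∀ I : Set α, IsLowerSet I → F I)
    (hfilter : ∀ (α : Type) [Finite α] [PartialOrder α],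
      F α → ∀ I : Set α, IsUpperSet I → F I)
    (hlin : ∀ (α : Type) [Finite α] [PartialOrder α], F α →
      ∀ Ω : Polynomial ℚ, (∀ n : ℕ, 1 ≤ n → Ω.eval (n : ℚ) = orderCount α n) →
        0 ≤ Ω.coeff 1)
    (α : Type) [Finite α] [PartialOrder α] (hP : F α)
    (A : Set α) (hminmax : ∀ x : α, IsMin x ∨ IsMax x → x ∈ A)
    (r : ℕ) (a : Fin (r + 1) → α) (hinj : Function.Injective a)
    (hrange : Set.range a = A)
    (hnat : ∀ i j : Fin (r + 1), a i < a j → i < j) :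
    ∃ f : MvPolynomial (Fin r) ℚ,
      (∀ m : Fin r →₀ ℕ, 0 ≤ f.coeff m) ∧
      ∀ lam : α → ℤ, (∀ i j : Fin (r + 1), i ≤ j → lam (a i) ≤ lam (a j)) →
        (markedCount A lam : ℚ) =
          MvPolynomial.eval
            (fun i : Fin r => ((lam (a i.succ) : ℚ) - (lam (a i.castSucc) : ℚ))) f := by
  classical
  subst hrange
  have hidx : ∀ j k : Fin (r + 1), a k ≤ a j → k ≤ j := by
    intro j k hkj
    rcases lt_or_eq_of_le hkj with h | h
    · exact (hnat k j h).le
    · exact (hinj h).le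
  have hb : ∀ p : α, ∃ j, a j ≤ p := by
    intro p
    obtain ⟨m, hm, hmin⟩ := Finite.exists_le_minimal (p := fun _ : α => True) (a := p) trivial
    obtain ⟨j, rfl⟩ := hminmax m (Or.inl (minimal_true.mp hmin))
    exact ⟨j, hm⟩
  have hab : ∀ p : α, ∃ j, p ≤ a j := by
    intro p
    obtain ⟨m, hm, hmax⟩ := Finite.exists_le_maximal (p := fun _ : α => True) (a := p) trivial
    obtain ⟨j, rfl⟩ := hminmax m (Or.inr (maximal_true.mp hmax))
    exact ⟨j, hm⟩
  haveI : Fintype {τ : α → Fin (r + 1) // Monotone τ ∧ ∀ j, τ (a j) = j} :=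
    Fintype.ofFinite _
  choose q hq using fun (τ : {τ : α → Fin (r + 1) // Monotone τ ∧ ∀ j, τ (a j) = j})
    (i : Fin r) => MOP.interp_exists (Nat.card ↥(MOP.QSet a τ.1 i)) ↥(MOP.QSet a τ.1 i) le_rfl
  have hqnn : ∀ τ i k, 0 ≤ (q τ i).coeff k := fun τ i k =>
    MOP.univariate_coeff_nonneg F hideal hfilter hlin (Nat.card ↥(MOP.QSet a τ.1 i)) _ le_rfl
      (MOP.F_QSet F hiso hideal hfilter hP τ.1 τ.2.1 i) (q τ i) (hq τ i) k
  refine ⟨∑ τ : {τ : α → Fin (r + 1) // Monotone τ ∧ ∀ j, τ (a j) = j},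
    ∏ i : Fin r, Polynomial.aeval (MvPolynomial.X i : MvPolynomial (Fin r) ℚ) (q τ i),
    ?_, ?_⟩
  · intro m
    rw [MvPolynomial.coeff_sum]
    apply Finset.sum_nonneg
    intro τ _
    exact MOP.mv_prod_coeff_nonneg Finset.univ _
      (fun i _ m' => MOP.mv_coeff_aeval_nonneg _ (hqnn τ i) i m') m
  · intro lam hmono
    rw [MOP.marked_split hb hab hidx hmono, map_sum]
    push_cast
    apply Finset.sum_congr rfl
    intro τ _
    rw [map_prod]
    apply Finset.prod_congr rfl
    intro i _
    rw [MOP.mv_eval_aeval, ← hq τ i (MOP.tdiff a lam i)]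
    congr 1
    have := MOP.tdiff_cast (a := a) (lam := lam) hmono i
    push_cast
    exact_mod_cast this
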